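/- The set of Gödel codes of first-order formulas (in the language of PA extended with an uninterpreted unary function symbol F) that are true in every standard model of PA + F is Π¹₁-hard: every Π¹₁ subset of ℕ many-one reduces to it via n ↦ ⌜A(F, n̄)⌝. -/

import Mathlib

/-! ### First-order logic with inductively defined predicates (FOL_ID) -/

/-- A first-order signature with ordinary and inductive predicate symbols. -/
structure Signature : Type 1 where
  Func : Type
  arF : Func → ℕ
  Pred : Type
  arP : Pred → ℕ
  IndPred : Type
  arI : IndPred → ℕ

/-- Terms over a signature. -/
inductive Tm (S : Signature) : Type
  | var : ℕ → Tm S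
  | func (f : S.Func) : (Fin (S.arF f) → Tm S) → Tm S

/-- Formulas of FOL_ID. -/
inductive Fm (S : Signature) : Type
  | fals : Fm S
  | eq : Tm S → Tm S → Fm S
  | pred (Q : S.Pred) : (Fin (S.arP Q) → Tm S) → Fm S
  | ind (P : S.IndPred) : (Fin (S.arI P) → Tm S) → Fm S
  | not : Fm S → Fm S
  | and : Fm S → Fm S → Fm S
  | or : Fm S → Fm S → Fm S
  | imp : Fm S → Fm S → Fm S
  | all : ℕ → Fm S → Fm S
  | ex : ℕ → Fm S → Fm S

/-- A first-order structure for a signature. -/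
structure Struc (S : Signature) : Type 1 where
  U : Type
  interpF (f : S.Func) : (Fin (S.arF f) → U) → U
  interpP (Q : S.Pred) : Set (Fin (S.arP Q) → U)
  interpI : Set ((P : S.IndPred) × (Fin (S.arI P) → U))

/-- Evaluation of terms. -/
def Tm.eval {S : Signature} (M : Struc S) (ρ : ℕ → M.U) : Tm S → M.U
  | .var n => ρ n
  | .func f ts => M.interpF f (fun i => (ts i).eval M ρ)

/-- Update of a variable assignment. -/
def update {α : Type} (ρ : ℕ → α) (n : ℕ) (a : α) : ℕ → α :=
  fun m => if m = n then a else ρ m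

/-- Tarskian satisfaction. -/
def Sat {S : Signature} (M : Struc S) (ρ : ℕ → M.U) : Fm S → Prop
  | .fals => False
  | .eq t u => t.eval M ρ = u.eval M ρ
  | .pred Q ts => (fun i => (ts i).eval M ρ) ∈ M.interpP Q
  | .ind P ts => ⟨P, fun i => (ts i).eval M ρ⟩ ∈ M.interpI
  | .not A => ¬ Sat M ρ A
  | .and A B => Sat M ρ A ∧ Sat M ρ B
  | .or A B => Sat M ρ A ∨ Sat M ρ B
  | .imp A B => Sat M ρ A → Sat M ρ B
  | .all n A => ∀ a : M.U, Sat M (update ρ n a) A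
  | .ex n A => ∃ a : M.U, Sat M (update ρ n a) A

/-- Free variables of a term. -/
def Tm.fv {S : Signature} : Tm S → Finset ℕ
  | .var n => {n}
  | .func _ ts => Finset.univ.biUnion (fun i => (ts i).fv)

/-- Free variables of a formula. -/
def Fm.fv {S : Signature} : Fm S → Finset ℕ
  | .fals => ∅
  | .eq t u => t.fv ∪ u.fv
  | .pred _ ts => Finset.univ.biUnion (fun i => (ts i).fv)
  | .ind _ ts => Finset.univ.biUnion (fun i => (ts i).fv)
  | .not A => A.fv
  | .and A B => A.fv ∪ B.fv
  | .or A B => A.fv ∪ B.fv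
  | .imp A B => A.fv ∪ B.fv
  | .all n A => A.fv.erase n
  | .ex n A => A.fv.erase n

/-- Simultaneous substitution on terms. -/
def Tm.subst {S : Signature} (σ : ℕ → Tm S) : Tm S → Tm S
  | .var n => σ n
  | .func f ts => .func f (fun i => (ts i).subst σ)

/-- Substitution of a (closed) term for a variable in a formula. -/
def Fm.substC {S : Signature} (x : ℕ) (t : Tm S) : Fm S → Fm S
  | .fals => .fals
  | .eq a b => .eq (a.subst (fun n => if n = x then t else .var n))
      (b.subst (fun n => if n = x then t else .var n))
  | .pred Q ts => .pred Q (fun i => (ts i).subst (fun n => if n = x then t else .var n))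
  | .ind P ts => .ind P (fun i => (ts i).subst (fun n => if n = x then t else .var n))
  | .not A => .not (A.substC x t)
  | .and A B => .and (A.substC x t) (B.substC x t)
  | .or A B => .or (A.substC x t) (B.substC x t)
  | .imp A B => .imp (A.substC x t) (B.substC x t)
  | .all n A => if n = x then .all n A else .all n (A.substC x t)
  | .ex n A => if n = x then .ex n A else .ex n (A.substC x t)

/-- A production rule for inductive predicates. -/
structure ProdRule (S : Signature) : Type where
  concl : S.IndPred
  conclArgs : Fin (S.arI concl) → Tm S
  ordPrems : List ((Q : S.Pred) × (Fin (S.arP Q) → Tm S))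
  indPrems : List ((P : S.IndPred) × (Fin (S.arI P) → Tm S))

/-- The monotone operator determined by a set of production rules over a structure. -/
def step {S : Signature} (M : Struc S) (Φ : List (ProdRule S))
    (X : Set ((P : S.IndPred) × (Fin (S.arI P) → M.U))) :
    Set ((P : S.IndPred) × (Fin (S.arI P) → M.U)) :=
  { v | ∃ r ∈ Φ, ∃ ρ : ℕ → M.U,
      (∀ q ∈ r.ordPrems, (fun i => (q.2 i).eval M ρ) ∈ M.interpP q.1) ∧
      (∀ p ∈ r.indPrems, ⟨p.1, fun i => (p.2 i).eval M ρ⟩ ∈ X) ∧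
      v = ⟨r.concl, fun i => (r.conclArgs i).eval M ρ⟩ }

theorem step_mono {S : Signature} (M : Struc S) (Φ : List (ProdRule S)) :
    Monotone (step M Φ) := by
  rintro X Y h v ⟨r, hr, ρ, hq, hp, hv⟩
  exact ⟨r, hr, ρ, hq, fun p hp' => h (hp p hp'), hv⟩

/-- The operator for the production rules, as an order homomorphism. -/
def stepHom {S : Signature} (M : Struc S) (Φ : List (ProdRule S)) :
    Set ((P : S.IndPred) × (Fin (S.arI P) → M.U)) →o
      Set ((P : S.IndPred) × (Fin (S.arI P) → M.U)) :=
  ⟨step M Φ, step_mono M Φ⟩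

/-- A structure is a standard model for `(S, Φ)` if it interprets the inductive
predicates by the least fixpoint of the operator for `Φ`. -/
def Standard {S : Signature} (M : Struc S) (Φ : List (ProdRule S)) : Prop :=
  M.interpI = OrderHom.lfp (stepHom M Φ)

/-- The variables occurring in a production rule. -/
def ProdRule.vars {S : Signature} (r : ProdRule S) : Finset ℕ :=
  (Finset.univ.biUnion fun i => (r.conclArgs i).fv) ∪
    (r.ordPrems.foldr (fun q s => s ∪ Finset.univ.biUnion fun i => (q.2 i).fv) ∅) ∪
    (r.indPrems.foldr (fun p s => s ∪ Finset.univ.biUnion fun i => (p.2 i).fv) ∅)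

def bigAnd {S : Signature} : List (Fm S) → Fm S
  | [] => .not .fals
  | A :: l => .and A (bigAnd l)

def bigOr {S : Signature} : List (Fm S) → Fm S
  | [] => .fals
  | A :: l => .or A (bigOr l)

def exList {S : Signature} : List ℕ → Fm S → Fm S
  | [], A => A
  | n :: l, A => .ex n (exList l A)

/-- The `k`-fold syntactic unfolding `P^{(k)}(t⃗)` of an inductive predicate:
`P^{(0)}(t⃗) ≡ ⊥` and `P^{(k+1)}(t⃗)` is the disjunction, over production rules with
conclusion `P t⃗₀`, of `∃y⃗ (t⃗ = t⃗₀ ∧ ⋀ Q_l u⃗_l ∧ ⋀ P_{j_p}^{(k)}(t⃗_p))`, with the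
rule variables `y⃗` renamed to be fresh for `t⃗`. -/
def unfold {S : Signature} [DecidableEq S.IndPred] (Φ : List (ProdRule S)) :
    ℕ → (P : S.IndPred) → (Fin (S.arI P) → Tm S) → Fm S
  | 0, _, _ => .fals
  | (k+1), P, ts =>
    bigOr (Φ.map fun r =>
      if h : r.concl = P then
        let N : ℕ := ((Finset.univ.biUnion fun i => (ts i).fv).sup id) + 1
        let σ : ℕ → Tm S := fun n => .var (n + N)
        exList ((r.vars.sort (· ≤ ·)).map (· + N))
          (.and (bigAnd ((List.finRange (S.arI P)).map fun i =>
              .eq (ts i) (((h ▸ r.conclArgs) i).subst σ)))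
            (.and (bigAnd (r.ordPrems.map fun q => .pred q.1 fun i => (q.2 i).subst σ))
              (bigAnd (r.indPrems.map fun p => unfold Φ k p.1 fun i => (p.2 i).subst σ))))
      else .fals)

/-! ### The language of PA with an extra function symbol F, and the signature with
the inductive predicate N -/

/-- Function symbols of PA + F: zero, successor, addition, multiplication and the
uninterpreted function symbol F. -/
inductive PAFunc : Type
  | zero | succ | plus | times | F

def arPAF : PAFunc → ℕ
  | .zero => 0
  | .succ => 1
  | .plus => 2
  | .times => 2
  | .F => 1

/-- The signature of PA + F (no ordinary and no inductive predicate symbols). -/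
def SigPAF : Signature :=
  ⟨PAFunc, arPAF, Empty, fun e => e.elim, Empty, fun e => e.elim⟩

/-- The standard model of PA + F with universe ℕ, the usual interpretations of
`0, s, +, ×`, and `F` interpreted by `φ`. -/
def stdPAF (φ : ℕ → ℕ) : Struc SigPAF where
  U := ℕ
  interpF := fun f => match f with
    | .zero => fun _ => 0
    | .succ => fun v : Fin 1 → ℕ => v 0 + 1
    | .plus => fun v : Fin 2 → ℕ => v 0 + v 1
    | .times => fun v : Fin 2 → ℕ => v 0 * v 1
    | .F => fun v : Fin 1 → ℕ => φ (v 0)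
  interpP := fun Q => nomatch Q
  interpI := ∅

/-- Numerals. -/
def numeral : ℕ → Tm SigPAF
  | 0 => .func .zero ![]
  | n + 1 => .func .succ ![numeral n]

/-- The signature `Σ_PA^F`: the function symbols of PA + F together with a unary
inductive predicate symbol `N`. -/
def SigPAFN : Signature :=
  ⟨PAFunc, arPAF, Empty, fun e => e.elim, Unit, fun _ => 1⟩

def tmMap : Tm SigPAF → Tm SigPAFN
  | .var n => .var n
  | .func f ts => .func f (fun i => tmMap (ts i))

/-- The relativization `A^N` of a PA + F formula to the inductive predicate `N`:
quantifiers are bounded to `N`, atomic formulas are unchanged. -/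
def relN : Fm SigPAF → Fm SigPAFN
  | .fals => .fals
  | .eq t u => .eq (tmMap t) (tmMap u)
  | .pred Q _ => nomatch Q
  | .ind P _ => nomatch P
  | .not A => .not (relN A)
  | .and A B => .and (relN A) (relN B)
  | .or A B => .or (relN A) (relN B)
  | .imp A B => .imp (relN A) (relN B)
  | .all x A => .all x (.imp (.ind () (fun _ => .var x)) (relN A))
  | .ex x A => .ex x (.and (.ind () (fun _ => .var x)) (relN A))

/-- The production rules `Φ_N` for `N`: `N 0`, and `N x ⟹ N (s x)`. -/
def ruleN0 : ProdRule SigPAFN :=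
  { concl := (), conclArgs := fun _ => .func .zero ![], ordPrems := [], indPrems := [] }

def ruleNs : ProdRule SigPAFN :=
  { concl := (), conclArgs := fun _ => .func .succ ![.var 0], ordPrems := [],
    indPrems := [⟨(), fun _ => .var 0⟩] }

def PhiN : List (ProdRule SigPAFN) := [ruleN0, ruleNs]

/-- The Peano axioms (PA1)–(PA6) as formulas of PA + F. -/
def PA1 : Fm SigPAF := .all 0 (.not (.eq (.func .succ ![.var 0]) (.func .zero ![])))
def PA2 : Fm SigPAF := .all 0 (.all 1 (.imp
  (.eq (.func .succ ![.var 0]) (.func .succ ![.var 1])) (.eq (.var 0) (.var 1))))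
def PA3 : Fm SigPAF := .all 0 (.eq (.func .plus ![.var 0, .func .zero ![]]) (.var 0))
def PA4 : Fm SigPAF := .all 0 (.all 1 (.eq
  (.func .plus ![.var 0, .func .succ ![.var 1]])
  (.func .succ ![.func .plus ![.var 0, .var 1]])))
def PA5 : Fm SigPAF := .all 0 (.eq (.func .times ![.var 0, .func .zero ![]])
  (.func .zero ![]))
def PA6 : Fm SigPAF := .all 0 (.all 1 (.eq
  (.func .times ![.var 0, .func .succ ![.var 1]])
  (.func .plus ![.func .times ![.var 0, .var 1], .var 0])))

/-- The axiom `(F)`: `∀x (N x → N (F x))`. -/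
def axF : Fm SigPAFN :=
  .all 0 (.imp (.ind () (fun _ => .var 0)) (.ind () (fun _ => .func .F ![.var 0])))

lemma tm_subst_closed_eval {S : Signature} (M : Struc S) (ρ : ℕ → M.U) (x : ℕ)
    (t : Tm S) (c : M.U) (hc : ∀ ρ', t.eval M ρ' = c) (a : Tm S) :
    (a.subst (fun m => if m = x then t else .var m)).eval M ρ = a.eval M (update ρ x c) := by
  induction a with
  | var m =>
    by_cases h : m = x <;> simp [Tm.subst, Tm.eval, h, update, hc]
  | func f ts ih =>
    simp only [Tm.subst, Tm.eval]
    exact congrArg _ (funext fun i => ih i)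

lemma sat_substC_closed {S : Signature} (M : Struc S) (x : ℕ)
    (t : Tm S) (c : M.U) (hc : ∀ ρ', t.eval M ρ' = c) (A : Fm S) :
    ∀ ρ : ℕ → M.U, Sat M ρ (A.substC x t) ↔ Sat M (update ρ x c) A := by
  induction A with
  | fals => intro ρ; rfl
  | eq a b =>
    intro ρ
    simp only [Fm.substC, Sat, tm_subst_closed_eval M ρ x t c hc]
  | pred Q ts =>
    intro ρ
    have he : (fun i => Tm.eval M ρ (Tm.subst (fun m => if m = x then t else Tm.var m) (ts i)))
        = (fun i => Tm.eval M (update ρ x c) (ts i)) :=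
      funext fun i => tm_subst_closed_eval M ρ x t c hc (ts i)
    simp only [Fm.substC, Sat, he]
  | ind P ts =>
    intro ρ
    have he : (fun i => Tm.eval M ρ (Tm.subst (fun m => if m = x then t else Tm.var m) (ts i)))
        = (fun i => Tm.eval M (update ρ x c) (ts i)) :=
      funext fun i => tm_subst_closed_eval M ρ x t c hc (ts i)
    simp only [Fm.substC, Sat, he]
  | not A ihA => intro ρ; simp only [Fm.substC, Sat, ihA]
  | and A B ihA ihB => intro ρ; simp only [Fm.substC, Sat, ihA, ihB]
  | or A B ihA ihB => intro ρ; simp only [Fm.substC, Sat, ihA, ihB]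
  | imp A B ihA ihB => intro ρ; simp only [Fm.substC, Sat, ihA, ihB]
  | all m A ihA =>
    intro ρ
    by_cases h : m = x
    · subst h
      simp only [Fm.substC, if_pos rfl, Sat]
      have hu : ∀ a : M.U, update ρ m a = update (update ρ m c) m a := by
        intro a; funext k; by_cases hk : k = m <;> simp [update, hk]
      exact ⟨fun H a => (hu a) ▸ H a, fun H a => (hu a) ▸ H a⟩
    · simp only [Fm.substC, if_neg h, Sat]
      have heq : ∀ a : M.U, update (update ρ m a) x c = update (update ρ x c) m a := by
        intro a; funext k
        by_cases h1 : k = x <;> by_cases h2 : k = m <;> simp_all [update]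
      constructor <;> intro H a
      · exact (heq a) ▸ (ihA (update ρ m a)).mp (H a)
      · exact (ihA (update ρ m a)).mpr ((heq a).symm ▸ H a)
  | ex m A ihA =>
    intro ρ
    by_cases h : m = x
    · subst h
      simp only [Fm.substC, if_pos rfl, Sat]
      have hu : ∀ a : M.U, update ρ m a = update (update ρ m c) m a := by
        intro a; funext k; by_cases hk : k = m <;> simp [update, hk]
      exact ⟨fun ⟨a, H⟩ => ⟨a, (hu a) ▸ H⟩, fun ⟨a, H⟩ => ⟨a, (hu a).symm ▸ H⟩⟩
    · simp only [Fm.substC, if_neg h, Sat]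
      have heq : ∀ a : M.U, update (update ρ m a) x c = update (update ρ x c) m a := by
        intro a; funext k
        by_cases h1 : k = x <;> by_cases h2 : k = m <;> simp_all [update]
      constructor <;> rintro ⟨a, H⟩
      · exact ⟨a, (heq a) ▸ (ihA (update ρ m a)).mp H⟩
      · exact ⟨a, (ihA (update ρ m a)).mpr ((heq a).symm ▸ H)⟩

lemma tm_subst_closed_fv {S : Signature} (x : ℕ) (t : Tm S) (ht : t.fv = ∅)
    (a : Tm S) : (a.subst (fun m => if m = x then t else .var m)).fv ⊆ a.fv.erase x := by
  induction a with
  | var m =>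
    by_cases h : m = x
    · simp [Tm.subst, h, ht]
    · intro k hk
      simp only [Tm.subst, if_neg h, Tm.fv, Finset.mem_singleton] at hk
      subst hk
      simp [Tm.fv, Finset.mem_erase, h]
  | func f ts ih =>
    intro m hm
    simp only [Tm.subst, Tm.fv, Finset.mem_biUnion, Finset.mem_univ, true_and] at hm
    obtain ⟨i, hmi⟩ := hm
    have h2 := Finset.mem_erase.mp (ih i hmi)
    rw [Finset.mem_erase]
    refine ⟨h2.1, ?_⟩
    simp only [Tm.fv, Finset.mem_biUnion, Finset.mem_univ, true_and]
    exact ⟨i, h2.2⟩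

lemma fm_substC_closed_fv {S : Signature} (x : ℕ) (t : Tm S) (ht : t.fv = ∅)
    (A : Fm S) : (A.substC x t).fv ⊆ A.fv.erase x := by
  induction A with
  | fals => simp [Fm.substC, Fm.fv]
  | eq a b =>
    simp only [Fm.substC, Fm.fv]
    apply Finset.union_subset
    · exact (tm_subst_closed_fv x t ht a).trans (Finset.erase_subset_erase _
        Finset.subset_union_left)
    · exact (tm_subst_closed_fv x t ht b).trans (Finset.erase_subset_erase _
        Finset.subset_union_right)
  | pred Q ts =>
    intro m hm
    simp only [Fm.substC, Fm.fv, Finset.mem_biUnion, Finset.mem_univ, true_and] at hm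
    obtain ⟨i, hmi⟩ := hm
    have h2 := Finset.mem_erase.mp (tm_subst_closed_fv x t ht (ts i) hmi)
    rw [Finset.mem_erase]
    refine ⟨h2.1, ?_⟩
    simp only [Fm.fv, Finset.mem_biUnion, Finset.mem_univ, true_and]
    exact ⟨i, h2.2⟩
  | ind P ts =>
    intro m hm
    simp only [Fm.substC, Fm.fv, Finset.mem_biUnion, Finset.mem_univ, true_and] at hm
    obtain ⟨i, hmi⟩ := hm
    have h2 := Finset.mem_erase.mp (tm_subst_closed_fv x t ht (ts i) hmi)
    rw [Finset.mem_erase]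
    refine ⟨h2.1, ?_⟩
    simp only [Fm.fv, Finset.mem_biUnion, Finset.mem_univ, true_and]
    exact ⟨i, h2.2⟩
  | not A ihA => simpa [Fm.substC, Fm.fv] using ihA
  | and A B ihA ihB =>
    simp only [Fm.substC, Fm.fv]
    exact Finset.union_subset
      (ihA.trans (Finset.erase_subset_erase _ Finset.subset_union_left))
      (ihB.trans (Finset.erase_subset_erase _ Finset.subset_union_right))
  | or A B ihA ihB =>
    simp only [Fm.substC, Fm.fv]
    exact Finset.union_subset
      (ihA.trans (Finset.erase_subset_erase _ Finset.subset_union_left))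
      (ihB.trans (Finset.erase_subset_erase _ Finset.subset_union_right))
  | imp A B ihA ihB =>
    simp only [Fm.substC, Fm.fv]
    exact Finset.union_subset
      (ihA.trans (Finset.erase_subset_erase _ Finset.subset_union_left))
      (ihB.trans (Finset.erase_subset_erase _ Finset.subset_union_right))
  | all m A ihA =>
    by_cases h : m = x
    · subst h
      simp only [Fm.substC, ↓reduceIte, Fm.fv]
      rw [Finset.erase_idem]
    · simp only [Fm.substC, if_neg h, Fm.fv]
      calc (A.substC x t).fv.erase m ⊆ (A.fv.erase x).erase m :=
            Finset.erase_subset_erase _ ihA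
        _ = (A.fv.erase m).erase x := Finset.erase_right_comm
  | ex m A ihA =>
    by_cases h : m = x
    · subst h
      simp only [Fm.substC, ↓reduceIte, Fm.fv]
      rw [Finset.erase_idem]
    · simp only [Fm.substC, if_neg h, Fm.fv]
      calc (A.substC x t).fv.erase m ⊆ (A.fv.erase x).erase m :=
            Finset.erase_subset_erase _ ihA
        _ = (A.fv.erase m).erase x := Finset.erase_right_comm

lemma numeral_fv (n : ℕ) : (numeral n).fv = ∅ := by
  induction n with
  | zero =>
    simp only [numeral, Tm.fv]
    apply Finset.eq_empty_of_forall_notMem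
    intro m hm
    rw [Finset.mem_biUnion] at hm
    obtain ⟨i, -, -⟩ := hm
    exact i.elim0
  | succ k ih =>
    simp only [numeral, Tm.fv]
    ext m
    simp only [Finset.mem_biUnion, Finset.mem_univ, Finset.notMem_empty, iff_false, true_and,
      not_exists]
    intro i
    have : (![numeral k] i : Tm SigPAF) = numeral k := by
      fin_cases i <;> rfl
    rw [this, ih]
    exact Finset.notMem_empty m

lemma numeral_eval (φ : ℕ → ℕ) (ρ : ℕ → ℕ) (n : ℕ) :
    (numeral n).eval (stdPAF φ) ρ = n := by
  induction n with
  | zero => rfl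
  | succ k ih => exact congrArg Nat.succ ih

/-- the set of Gödel codes of PA + F formulas true in every standard
model of PA + F is `Π¹₁`-hard: every `Π¹₁` subset of ℕ — i.e. every set of the form
`{ n | ∀ f, A(f, n) }` with `A` arithmetic with a function variable `f`, here
rendered as the formula `A` of PA + F with the uninterpreted function symbol `F`
playing the role of the function variable — many-one reduces to it via
`n ↦ ⌜A(F, n̄)⌝`. -/
theorem stmt17 (code : Fm SigPAF → ℕ) (hcode : Function.Injective code)
    (A : Fm SigPAF) (hA : A.fv ⊆ {0}) (n : ℕ) :
    (∀ (φ : ℕ → ℕ) (ρ : ℕ → ℕ), Sat (stdPAF φ) (update ρ 0 n) A) ↔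
      code (A.substC 0 (numeral n)) ∈
        { m | ∃ B : Fm SigPAF, B.fv = ∅ ∧ m = code B ∧
            ∀ (φ : ℕ → ℕ) (ρ : ℕ → ℕ), Sat (stdPAF φ) ρ B } := by
  constructor
  · intro h
    refine ⟨A.substC 0 (numeral n), ?_, rfl, ?_⟩
    · apply Finset.eq_empty_of_forall_notMem
      intro m hm
      have := fm_substC_closed_fv 0 (numeral n) (numeral_fv n) A hm
      rw [Finset.mem_erase] at this
      have := hA this.2
      simp only [Finset.mem_singleton] at this
      exact absurd this (fm_substC_closed_fv 0 (numeral n) (numeral_fv n) A hm |>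
        Finset.mem_erase.mp).1
    · intro φ ρ
      exact (sat_substC_closed (stdPAF φ) 0 (numeral n) n
        (fun ρ' => numeral_eval φ ρ' n) A ρ).mpr (h φ ρ)
  · rintro ⟨B, _, hBeq, hB⟩
    have hAB : A.substC 0 (numeral n) = B := hcode hBeq
    intro φ ρ
    exact (sat_substC_closed (stdPAF φ) 0 (numeral n) n
      (fun ρ' => numeral_eval φ ρ' n) A ρ).mp (hAB ▸ hB φ ρ)
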